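/- For each l ≥ 0, the complete simple game with class sizes n = (n_1, n_2, 5 + 2l) where n_1 ≥ 3 + 2l and n_2 ≥ 3, and shift-minimal winning coalition types w_1 = (l+1, 1, l+2) and w_2 = (0, 1, 2(l+2)), is not 3-trade robust: there exist three winning coalition types and three losing coalition types with equal componentwise sums. -/
import Mathlib


/-- Dominance (partial-sums order) for coalition types with three classes. -/
def Dom3 (s w : ℕ × ℕ × ℕ) : Prop :=
  w.1 ≤ s.1 ∧ w.1 + w.2.1 ≤ s.1 + s.2.1 ∧
    w.1 + w.2.1 + w.2.2 ≤ s.1 + s.2.1 + s.2.2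

/-- For each `l ≥ 0`, the complete simple game with class sizes
`(n1, n2, 5 + 2l)` (`n1 ≥ 3 + 2l`, `n2 ≥ 3`) and shift-minimal winning types
`(l+1, 1, l+2)` and `(0, 1, 2(l+2))` is not `3`-trade robust. -/
theorem stmt19 (l n1 n2 : ℕ) (h1 : 3 + 2 * l ≤ n1) (h2 : 3 ≤ n2) :
    let n : ℕ × ℕ × ℕ := (n1, n2, 5 + 2 * l)
    let Win : ℕ × ℕ × ℕ → Prop := fun s =>
      Dom3 s (l + 1, 1, l + 2) ∨ Dom3 s (0, 1, 2 * (l + 2))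
    ∃ A B C D E F : ℕ × ℕ × ℕ,
      (A.1 ≤ n.1 ∧ A.2.1 ≤ n.2.1 ∧ A.2.2 ≤ n.2.2) ∧
      (B.1 ≤ n.1 ∧ B.2.1 ≤ n.2.1 ∧ B.2.2 ≤ n.2.2) ∧
      (C.1 ≤ n.1 ∧ C.2.1 ≤ n.2.1 ∧ C.2.2 ≤ n.2.2) ∧
      (D.1 ≤ n.1 ∧ D.2.1 ≤ n.2.1 ∧ D.2.2 ≤ n.2.2) ∧
      (E.1 ≤ n.1 ∧ E.2.1 ≤ n.2.1 ∧ E.2.2 ≤ n.2.2) ∧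
      (F.1 ≤ n.1 ∧ F.2.1 ≤ n.2.1 ∧ F.2.2 ≤ n.2.2) ∧
      Win A ∧ Win B ∧ Win C ∧ ¬ Win D ∧ ¬ Win E ∧ ¬ Win F ∧
      A.1 + B.1 + C.1 = D.1 + E.1 + F.1 ∧
      A.2.1 + B.2.1 + C.2.1 = D.2.1 + E.2.1 + F.2.1 ∧
      A.2.2 + B.2.2 + C.2.2 = D.2.2 + E.2.2 + F.2.2 := by
  intro n Win
  refine ⟨(l+1,1,l+2),(l+1,1,l+2),(l+1,1,l+2),(0,0,2*l+5),(2*l+3,0,0),(l,3,l+1),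
    ?_, ?_, ?_, ?_, ?_, ?_, ?_, ?_, ?_, ?_, ?_, ?_, ?_, ?_, ?_⟩ <;>
  simp only [n, Win, Dom3, not_or, not_and_or] <;> omega
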